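/- arXiv:2203.08628 — 2 statements merged into one kernel-verified Lean document; each statement's English description precedes it below -/
import Mathlib

section
/- Let G be a group with subgroups U, H, K such that G = UHK, H normalizes U, U ∩ H = {1}, and B ∩ K = (U ∩ K)(H ∩ K) where B = UH. Let χ : H → ℂˣ be a group homomorphism trivial on H ∩ K. If u₁h₁k₁ = u₂h₂k₂ with uᵢ ∈ U, hᵢ ∈ H, kᵢ ∈ K, then χ(h₁) = χ(h₂). Hence g ↦ χ(Iw_H(g)) is a well-defined function on G. -/
theorem stmt_6 {G : Type*} [Group G] (U H K : Subgroup G)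
    (hIwasawa : ∀ g : G, ∃ u ∈ U, ∃ h ∈ H, ∃ k ∈ K, g = u * h * k)
    (hnorm : ∀ h ∈ H, ∀ u ∈ U, h * u * h⁻¹ ∈ U)
    (hUH : U ⊓ H = ⊥)
    (hBK : ∀ g ∈ K, (∃ u ∈ U, ∃ h ∈ H, g = u * h) →
      ∃ u ∈ U ⊓ K, ∃ h ∈ H ⊓ K, g = u * h)
    (χ : H →* ℂˣ)
    (hχ : ∀ h : H, (h : G) ∈ K → χ h = 1) :
    ∀ (u₁ u₂ : G) (h₁ h₂ : H) (k₁ k₂ : G), u₁ ∈ U → u₂ ∈ U → k₁ ∈ K → k₂ ∈ K →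
      u₁ * (h₁ : G) * k₁ = u₂ * (h₂ : G) * k₂ → χ h₁ = χ h₂ := by
  intro u₁ u₂ h₁ h₂ k₁ k₂ hu₁ hu₂ hk₁ hk₂ heq
  -- k₂ * k₁⁻¹ = (h₂⁻¹ u₂⁻¹ u₁ h₂) * (h₂⁻¹ h₁)
  set u' : G := (h₂ : G)⁻¹ * (u₂⁻¹ * u₁) * h₂ with hu'def
  have hu'U : u' ∈ U := by
    have := hnorm (h₂ : G)⁻¹ (H.inv_mem h₂.2) (u₂⁻¹ * u₁) (U.mul_mem (U.inv_mem hu₂) hu₁)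
    simpa [hu'def, mul_assoc] using this
  set h' : H := h₂⁻¹ * h₁ with hh'def
  have hgK : k₂ * k₁⁻¹ ∈ K := K.mul_mem hk₂ (K.inv_mem hk₁)
  have hdecomp : k₂ * k₁⁻¹ = u' * (h' : G) := by
    have : (h₂ : G) * (k₂ * k₁⁻¹) = u₂⁻¹ * u₁ * h₁ :=
      calc (h₂ : G) * (k₂ * k₁⁻¹) = u₂⁻¹ * (u₂ * (h₂:G) * k₂) * k₁⁻¹ := by group
        _ = u₂⁻¹ * (u₁ * (h₁:G) * k₁) * k₁⁻¹ := by rw [← heq]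
        _ = u₂⁻¹ * u₁ * h₁ := by group
    have : k₂ * k₁⁻¹ = (h₂ : G)⁻¹ * (u₂⁻¹ * u₁ * h₁) := by
      rw [← this]; group
    rw [this, hu'def, hh'def]
    push_cast
    group
  obtain ⟨u, huUK, h, hhHK, hgh⟩ := hBK _ hgK ⟨u', hu'U, h', h'.2, hdecomp⟩
  -- uniqueness: u⁻¹ * u' = h * h'⁻¹ ∈ U ⊓ H = ⊥
  have hkey : u⁻¹ * u' ∈ U ⊓ H := by
    constructor
    · exact U.mul_mem (U.inv_mem huUK.1) hu'U
    · have : u⁻¹ * u' = h * (h' : G)⁻¹ := by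
        have := hgh.symm.trans hdecomp
        calc u⁻¹ * u' = u⁻¹ * (u' * (h' : G)) * (h' : G)⁻¹ := by group
          _ = u⁻¹ * (u * h) * (h' : G)⁻¹ := by rw [← this]
          _ = h * (h' : G)⁻¹ := by group
      rw [this]
      exact H.mul_mem hhHK.1 (H.inv_mem h'.2)
  have heq1 : u⁻¹ * u' = 1 := by
    have := hUH ▸ hkey
    simpa using this
  have hheq : h = (h' : G) := by
    have := hgh.symm.trans hdecomp
    have hu : u = u' := by
      have : u⁻¹ * u' = 1 := heq1
      calc u = u * (u⁻¹ * u') := by rw [this]; group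
        _ = u' := by group
    rw [hu] at this
    exact mul_left_cancel this
  have hh'K : ((h' : H) : G) ∈ K := hheq ▸ hhHK.2
  have := hχ h' hh'K
  rw [hh'def] at this
  simp only [map_mul, map_inv] at this
  have : (χ h₂)⁻¹ * χ h₁ = 1 := this
  calc χ h₁ = χ h₂ * ((χ h₂)⁻¹ * χ h₁) := by group
    _ = χ h₂ := by rw [this]; group
end

section
/- Let V be a module over a commutative ring graded by an additive monoid of weights, and let h be a diagonalizable operator acting on the weight space V_μ by a scalar χ(μ). Let u be an operator such that u(V_μ) ⊆ ⊕_{ν ⪰ μ} V_ν (upper triangular with respect to the partial order ⪰). If χ(μ)/χ(ν) lies in a subring R whenever ν ⪰ μ, then the conjugate h⁻¹ u h maps V_μ into ⊕_{ν ⪰ μ} R · (components of u V_μ); in particular, if u preserves an R-lattice L = ⊕_μ L_μ and χ(μ − ν as ratio) ∈ R for ν ⪰ μ, then h⁻¹ u h also preserves L. -/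
/-- Conjugation of a `⪰`-upper-triangular operator `u` (viewed as a matrix in
weight coordinates) by the diagonalizable operator `h` acting on the weight
space `V_μ` by the scalar `χ μ` multiplies the `(ν, μ)` block by `χ μ / χ ν`;
if the entries of `u` lie in a subring `R` (i.e. `u` preserves an `R`-lattice)
and `χ μ / χ ν ∈ R` whenever `ν ⪰ μ`, then all entries of `h⁻¹ u h` lie in `R`
(i.e. `h⁻¹ u h` also preserves the lattice). -/
theorem stmt_9 {𝕜 : Type*} [Field 𝕜] (R : Subring 𝕜)
    {ι : Type*} [PartialOrder ι]
    (u : ι → ι → 𝕜) (htri : ∀ ν μ : ι, u ν μ ≠ 0 → μ ≤ ν)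
    (hu : ∀ ν μ : ι, u ν μ ∈ R)
    (χ : ι → 𝕜) (hχ : ∀ μ, χ μ ≠ 0)
    (hratio : ∀ μ ν : ι, μ ≤ ν → χ μ / χ ν ∈ R) :
    ∀ ν μ : ι, (χ ν)⁻¹ * u ν μ * χ μ ∈ R := by
  intro ν μ
  by_cases h : u ν μ = 0
  · simpa [h] using zero_mem R
  · have : (χ ν)⁻¹ * u ν μ * χ μ = u ν μ * (χ μ / χ ν) := by
      field_simp
    rw [this]
    exact mul_mem (hu ν μ) (hratio μ ν (htri ν μ h))
end
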